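/- Suppose p is a fixed point of a homeomorphism f of a compact metric space M, and S = ⋃_{K>0} S_K is an f-invariant set (f(S) = S) exhausted by compact pieces S_K with the contraction property: for every K and every ε > 0 there is n such that f^n(S_K) ⊆ S_ε, where S_ε is the piece of S within the ε-ball of p. If every leaf W(x) of an f-covariant family (f(W(x)) = W(f(x))) meets S_{K₀} for a uniform K₀, then for every ε > 0 and every x, the leaf W(x) meets S_ε; in particular every leaf comes ε-close to p for all ε > 0. -/
import Mathlib


open Metric

lemma iter_cov {M : Type*} [MetricSpace M] (f : M ≃ₜ M) (W : M → Set M)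
    (hcov : ∀ x, f '' W x = W (f x)) (n : ℕ) (x : M) :
    (f : M → M)^[n] '' W x = W ((f : M → M)^[n] x) := by
  induction n with
  | zero => simp
  | succ n ih =>
    rw [Function.iterate_succ', Set.image_comp, ih, hcov]; rfl

/-- Step 3 of the Minimality Criterion: if `f^n` contracts the compact pieces `S_K` of the
invariant set `S` into arbitrarily small neighborhoods of the fixed point `p`, and every leaf
of the `f`-covariant family meets `S_{K₀}` along all backward iterates, then every leaf meets
`S_ε` for every `ε > 0`; in particular every leaf comes `ε`-close to `p`. -/
theorem leaves_meet_small_stable_pieces {M : Type*} [MetricSpace M] [CompactSpace M]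
    (f : M ≃ₜ M) (p : M) (hp : f p = p)
    (S : Set M) (hSinv : f '' S = S)
    (SK : ℝ → Set M) (hScpt : ∀ K, IsCompact (SK K))
    (hSmono : ∀ K K' : ℝ, K ≤ K' → SK K ⊆ SK K') (hSexh : S = ⋃ K : ℝ, SK K)
    (SE : ℝ → Set M) (hSE : ∀ ε > (0 : ℝ), SE ε ⊆ ball p ε ∩ S)
    (hcontract : ∀ K : ℝ, ∀ ε > (0 : ℝ), ∃ n : ℕ, (f : M → M)^[n] '' SK K ⊆ SE ε)
    (W : M → Set M) (hcov : ∀ x, f '' W x = W (f x))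
    (K₀ : ℝ) (hmeet : ∀ x : M, ∀ n : ℕ, (W (((f.symm : M → M))^[n] x) ∩ SK K₀).Nonempty) :
    ∀ ε > (0 : ℝ), ∀ x : M, (W x ∩ SE ε).Nonempty ∧ ∃ y ∈ W x, dist y p < ε := by
  intro ε hε x
  obtain ⟨n, hn⟩ := hcontract K₀ ε hε
  obtain ⟨y, hyW, hyK⟩ := hmeet x n
  have hfix : (f : M → M)^[n] ((f.symm : M → M)^[n] x) = x := by
    have := Function.LeftInverse.iterate (g := (f : M → M)) (f := (f.symm : M → M))
      (fun a => f.apply_symm_apply a) n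
    exact this x
  have hyW' : (f : M → M)^[n] y ∈ W x := by
    have := iter_cov f W hcov n ((f.symm : M → M)^[n] x)
    rw [hfix] at this
    rw [← this]
    exact ⟨y, hyW, rfl⟩
  have hySE : (f : M → M)^[n] y ∈ SE ε := hn ⟨y, hyK, rfl⟩
  refine ⟨⟨_, hyW', hySE⟩, _, hyW', ?_⟩
  exact (hSE ε hε hySE).1
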